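/- Fix μ > 0, L > 0, ξ > 0, integers K ≥ 0 and M ≥ 1, losses x₁,…,x_K with x_k ≥ L for all k, and θ̄ > 0; set φ = ξMθ̄ and S = Σ_{k=1}^K log(x_k/L). For α₀ > 0 let the prior on the tail index be Gamma with shape α₀ and scale β₀ = μ/α₀ (so that the prior mean is μ and the prior coefficient of variation 1/√α₀ tends to 0 as α₀ → ∞), and put ν(α₀) = α₀ − 1 − Mξ + K and ω(α₀) = α₀/μ + S. Then lim_{α₀→∞} √(φ/ω(α₀)) · R_{ν(α₀)+1}(2√(ω(α₀) φ)) = μ. -/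

import Mathlib

open MeasureTheory ProbabilityTheory Filter

/-- Modified Bessel function of the third kind:
`K_ν(z) = (1/2) ∫₀^∞ u^(ν-1) exp(-z(u+1/u)/2) du`. -/
noncomputable def besselK (ν z : ℝ) : ℝ :=
  (1 / 2) * ∫ u in Set.Ioi (0 : ℝ), u ^ (ν - 1) * Real.exp (-(z * (u + 1 / u)) / 2)

/-- The ratio `R_ν(z) = K_{ν+1}(z) / K_ν(z)`. -/
noncomputable def besselR (ν z : ℝ) : ℝ := besselK (ν + 1) z / besselK ν z

open Set Real Topology

lemma tendsto_zero_aux (a z : ℝ) (hz : 0 < z) :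
    Tendsto (fun u : ℝ => u ^ a * Real.exp (-(z * (u + 1 / u)) / 2)) (𝓝[>] (0:ℝ)) (𝓝 0) := by
  have h1 : Tendsto (fun t : ℝ => t ^ (-a) * Real.exp (-(z/2) * t)) atTop (𝓝 0) :=
    tendsto_rpow_mul_exp_neg_mul_atTop_nhds_zero (-a) (z/2) (by positivity)
  have h2 : Tendsto (fun u : ℝ => (u⁻¹) ^ (-a) * Real.exp (-(z/2) * u⁻¹)) (𝓝[>] (0:ℝ)) (𝓝 0) :=
    h1.comp tendsto_inv_nhdsGT_zero
  refine squeeze_zero' ?_ ?_ h2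
  · filter_upwards [self_mem_nhdsWithin] with u hu
    have hu : (0:ℝ) < u := hu
    positivity
  · filter_upwards [self_mem_nhdsWithin] with u hu
    have hu : (0:ℝ) < u := hu
    have e1 : (u⁻¹) ^ (-a) = u ^ a := by
      rw [Real.inv_rpow hu.le, ← Real.rpow_neg hu.le, neg_neg]
    rw [e1]
    have hb : Real.exp (-(z * (u + 1 / u)) / 2) ≤ Real.exp (-(z/2) * u⁻¹) := by
      rw [Real.exp_le_exp]
      rw [one_div]
      nlinarith [mul_pos hz hu, mul_pos hz (inv_pos.mpr hu)]
    have := Real.rpow_nonneg hu.le a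
    nlinarith [Real.exp_pos (-(z * (u + 1 / u)) / 2)]

lemma tendsto_atTop_aux (a z : ℝ) (hz : 0 < z) :
    Tendsto (fun u : ℝ => u ^ a * Real.exp (-(z * (u + 1 / u)) / 2)) atTop (𝓝 0) := by
  have h1 : Tendsto (fun t : ℝ => t ^ a * Real.exp (-(z/2) * t)) atTop (𝓝 0) :=
    tendsto_rpow_mul_exp_neg_mul_atTop_nhds_zero a (z/2) (by positivity)
  refine squeeze_zero' ?_ ?_ h1
  · filter_upwards [eventually_gt_atTop (0:ℝ)] with u hu
    positivity
  · filter_upwards [eventually_gt_atTop (0:ℝ)] with u hu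
    have hb : Real.exp (-(z * (u + 1 / u)) / 2) ≤ Real.exp (-(z/2) * u) := by
      rw [Real.exp_le_exp, one_div]
      nlinarith [mul_pos hz hu, mul_pos hz (inv_pos.mpr hu)]
    have := Real.rpow_nonneg hu.le a
    nlinarith [Real.exp_pos (-(z * (u + 1 / u)) / 2)]

lemma contOn_aux (a z : ℝ) :
    ContinuousOn (fun u : ℝ => u ^ a * Real.exp (-(z * (u + 1 / u)) / 2)) {u : ℝ | 0 < u} := by
  intro u hu
  have hu : (0:ℝ) < u := hu
  apply ContinuousAt.continuousWithinAt
  have h1 : ContinuousAt (fun u : ℝ => u ^ a) u :=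
    Real.continuousAt_rpow_const u a (Or.inl hu.ne')
  have h2 : ContinuousAt (fun u : ℝ => Real.exp (-(z * (u + 1 / u)) / 2)) u := by
    apply Real.continuous_exp.continuousAt.comp
    fun_prop (disch := exact hu.ne')
  exact h1.mul h2

lemma integrable_aux (a z : ℝ) (hz : 0 < z) :
    IntegrableOn (fun u : ℝ => u ^ a * Real.exp (-(z * (u + 1 / u)) / 2)) (Set.Ioi 0) := by
  set f : ℝ → ℝ := fun u => u ^ a * Real.exp (-(z * (u + 1 / u)) / 2) with hf
  have key2 : IntegrableOn f (Set.Ioi 1) := by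
    apply integrable_of_isBigO_exp_neg (a := 1) (b := z/4) (by positivity)
    · exact (contOn_aux a z).mono (fun u hu => show (0:ℝ) < u from lt_of_lt_of_le one_pos hu)
    · rw [Asymptotics.isBigO_iff]
      refine ⟨1, ?_⟩
      have h1 : Tendsto (fun t : ℝ => t ^ a * Real.exp (-(z/4) * t)) atTop (𝓝 0) :=
        tendsto_rpow_mul_exp_neg_mul_atTop_nhds_zero a (z/4) (by positivity)
      have h2 := h1.eventually_le_const (by norm_num : (0:ℝ) < 1)
      filter_upwards [h2, eventually_gt_atTop (0:ℝ)] with u h2 hu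
      have e1 : f u = (u ^ a * Real.exp (-(z/4) * u)) * Real.exp (-(z * (u + 1/u))/2 + (z/4) * u) := by
        rw [hf]; simp only []
        rw [mul_assoc, ← Real.exp_add]; ring_nf
      rw [e1, Real.norm_eq_abs, Real.norm_eq_abs, abs_exp, one_mul]
      have hnn : 0 ≤ u ^ a * Real.exp (-(z/4) * u) := by positivity
      rw [abs_mul, abs_of_nonneg hnn, abs_exp]
      have : Real.exp (-(z * (u + 1/u))/2 + (z/4) * u) ≤ Real.exp (-(z/4) * u) := by
        rw [Real.exp_le_exp, one_div]
        nlinarith [mul_pos hz hu, mul_pos hz (inv_pos.mpr hu)]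
      calc u ^ a * Real.exp (-(z/4) * u) * Real.exp (-(z * (u + 1/u))/2 + (z/4) * u)
          ≤ 1 * Real.exp (-(z/4) * u) := by
            apply mul_le_mul h2 this (Real.exp_pos _).le (by norm_num)
        _ = Real.exp (-(z/4) * u) := one_mul _
  -- on Ioc 0 1 : continuous extension
  have key1 : IntegrableOn f (Set.Ioc 0 1) := by
    set F : ℝ → ℝ := fun u => if u ≤ 0 then 0 else f u with hF
    have hFc : ContinuousOn F (Set.Icc 0 1) := by
      intro u hu
      rcases eq_or_lt_of_le hu.1 with h0 | h0
      · -- u = 0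
        subst h0
        unfold ContinuousWithinAt
        have hF0 : F 0 = 0 := by simp [hF]
        rw [hF0]
        have hsub : 𝓝[Set.Icc (0:ℝ) 1] 0 ≤ 𝓝[Set.Ici (0:ℝ)] 0 :=
          nhdsWithin_mono _ Set.Icc_subset_Ici_self
        refine Tendsto.mono_left ?_ hsub
        have : Set.Ici (0:ℝ) = insert 0 (Set.Ioi 0) := by
          rw [Set.Ioi_insert]
        rw [this, nhdsWithin_insert]
        rw [tendsto_sup]
        constructor
        · simpa [hF0] using (tendsto_pure_nhds F 0)
        · refine Tendsto.congr' ?_ (tendsto_zero_aux a z hz)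
          filter_upwards [self_mem_nhdsWithin] with v hv
          have : ¬ (v ≤ 0) := not_le.mpr hv
          simp [hF, hf, this, one_div]
      · -- 0 < u
        have : ∀ᶠ v in 𝓝 u, F v = f v := by
          filter_upwards [eventually_gt_nhds h0] with v hv
          simp [hF, not_le.mpr hv]
        have hfc : ContinuousAt f u := by
          have h' := (contOn_aux a z) u h0
          exact h'.continuousAt ((isOpen_lt continuous_const continuous_id).mem_nhds h0)
        exact (hfc.congr (this.mono fun v hv => hv.symm)).continuousWithinAt
    have hFi : IntegrableOn F (Set.Icc 0 1) := hFc.integrableOn_Icc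
    have := hFi.mono_set Set.Ioc_subset_Icc_self
    refine this.congr_fun ?_ measurableSet_Ioc
    intro v hv
    simp [hF, not_le.mpr hv.1]
  have : Set.Ioi (0:ℝ) = Set.Ioc 0 1 ∪ Set.Ioi 1 := by
    rw [Set.Ioc_union_Ioi_eq_Ioi]; norm_num
  rw [this]
  exact key1.union key2

lemma besselK_pos (ν z : ℝ) (hz : 0 < z) : 0 < besselK ν z := by
  rw [besselK]
  have hi := integrable_aux (ν - 1) z hz
  have h : 0 < ∫ u in Set.Ioi (0:ℝ), u ^ (ν - 1) * Real.exp (-(z * (u + 1 / u)) / 2) := by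
    rw [setIntegral_pos_iff_support_of_nonneg_ae ?_ hi]
    · have : Set.Ioi (0:ℝ) ⊆ Function.support (fun u : ℝ => u ^ (ν - 1) * Real.exp (-(z * (u + 1 / u)) / 2)) := by
        intro u hu
        have hu : (0:ℝ) < u := hu
        have : 0 < u ^ (ν - 1) * Real.exp (-(z * (u + 1 / u)) / 2) := by positivity
        exact this.ne'
      have : Set.Ioi (0:ℝ) ⊆ _ ∩ Set.Ioi (0:ℝ) := Set.subset_inter this subset_rfl
      calc (0:ENNReal) < volume (Set.Ioi (0:ℝ)) := by simp
        _ ≤ _ := measure_mono this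
    · filter_upwards [ae_restrict_mem measurableSet_Ioi] with u hu
      have hu : (0:ℝ) < u := hu
      positivity
  linarith

lemma besselK_rec {ν z : ℝ} (hν : 0 < ν) (hz : 0 < z) :
    z * besselK (ν + 1) z = 2 * ν * besselK ν z + z * besselK (ν - 1) z := by
  set g : ℝ → ℝ := fun u => Real.exp (-(z * (u + 1 / u)) / 2) with hg
  set f : ℝ → ℝ := fun u => u ^ ν * g u with hf
  set f' : ℝ → ℝ := fun u =>
    ν * (u ^ (ν - 1) * g u) - (z/2) * (u ^ ν * g u) + (z/2) * (u ^ (ν - 2) * g u) with hf'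
  have hderiv : ∀ u ∈ Set.Ioi (0:ℝ), HasDerivAt f (f' u) u := by
    intro u hu
    have hu : (0:ℝ) < u := hu
    have h1 : HasDerivAt (fun u : ℝ => u ^ ν) (ν * u ^ (ν - 1)) u :=
      Real.hasDerivAt_rpow_const (Or.inl hu.ne')
    have h2 : HasDerivAt (fun u : ℝ => -(z * (u + 1 / u)) / 2)
        (-(z * (1 + -(u^2)⁻¹)) / 2) u := by
      have : HasDerivAt (fun u : ℝ => u + 1/u) (1 + -(u^2)⁻¹) u := by
        simpa [one_div] using (hasDerivAt_id' u).fun_add (hasDerivAt_inv hu.ne')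
      exact ((this.const_mul z).neg).div_const 2
    have h3 : HasDerivAt g (-(z * (1 + -(u^2)⁻¹)) / 2 * g u) u := by
      simpa [hg, mul_comm] using h2.exp
    have h4 : HasDerivAt f _ u := h1.mul h3
    convert h4 using 1
    rw [hf']
    have e1 : u ^ (ν - 2) = u ^ ν * (u^2)⁻¹ := by
      rw [← Real.rpow_two, ← Real.rpow_neg hu.le, ← Real.rpow_add hu]
      ring_nf
    simp only [e1]
    field_simp
    ring
  have hcont : ContinuousWithinAt f (Set.Ici 0) 0 := by
    unfold ContinuousWithinAt
    have hF0 : f 0 = 0 := by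
      simp [hf, Real.zero_rpow (by positivity : ν ≠ 0)]
    rw [hF0]
    have : Set.Ici (0:ℝ) = insert 0 (Set.Ioi 0) := by rw [Set.Ioi_insert]
    rw [this, nhdsWithin_insert, tendsto_sup]
    exact ⟨by simpa [hF0] using (tendsto_pure_nhds f 0), tendsto_zero_aux ν z hz⟩
  have hint : IntegrableOn f' (Set.Ioi 0) := by
    apply Integrable.add
    · exact ((integrable_aux (ν-1) z hz).const_mul ν).sub ((integrable_aux ν z hz).const_mul (z/2))
    · exact (integrable_aux (ν-2) z hz).const_mul (z/2)
  have htop : Tendsto f atTop (𝓝 0) := tendsto_atTop_aux ν z hz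
  have key := integral_Ioi_of_hasDerivAt_of_tendsto hcont hderiv hint htop
  have hF0 : f 0 = 0 := by simp [hf, Real.zero_rpow (by positivity : ν ≠ 0)]
  rw [hF0, sub_zero] at key
  have A := (integrable_aux (ν-1) z hz).const_mul ν
  have B := (integrable_aux ν z hz).const_mul (z/2)
  have C := (integrable_aux (ν-2) z hz).const_mul (z/2)
  have hsplit : ∫ u in Set.Ioi (0:ℝ), f' u
      = ν * (∫ u in Set.Ioi (0:ℝ), u ^ (ν-1) * g u)
        - (z/2) * (∫ u in Set.Ioi (0:ℝ), u ^ ν * g u)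
        + (z/2) * (∫ u in Set.Ioi (0:ℝ), u ^ (ν-2) * g u) := by
    have E1 : ∫ u in Set.Ioi (0:ℝ),
        (ν * (u ^ (ν-1) * g u) - (z/2) * (u ^ ν * g u) + (z/2) * (u ^ (ν-2) * g u))
        = (∫ u in Set.Ioi (0:ℝ), (ν * (u ^ (ν-1) * g u) - (z/2) * (u ^ ν * g u)))
          + ∫ u in Set.Ioi (0:ℝ), (z/2) * (u ^ (ν-2) * g u) :=
      integral_add (A.sub B) C
    have E2 : ∫ u in Set.Ioi (0:ℝ),
        (ν * (u ^ (ν-1) * g u) - (z/2) * (u ^ ν * g u))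
        = (∫ u in Set.Ioi (0:ℝ), ν * (u ^ (ν-1) * g u))
          - ∫ u in Set.Ioi (0:ℝ), (z/2) * (u ^ ν * g u) :=
      integral_sub A B
    rw [hf']
    rw [E1, E2]
    simp only [integral_const_mul]
  rw [hsplit] at key
  have e1 : besselK ν z = (1/2) * ∫ u in Set.Ioi (0:ℝ), u ^ (ν-1) * g u := rfl
  have e2 : besselK (ν+1) z = (1/2) * ∫ u in Set.Ioi (0:ℝ), u ^ ν * g u := by
    rw [besselK, add_sub_cancel_right]
  have e3 : besselK (ν-1) z = (1/2) * ∫ u in Set.Ioi (0:ℝ), u ^ (ν-2) * g u := by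
    rw [besselK, show ν - 1 - 1 = ν - 2 by ring]
  rw [e1, e2, e3]
  linear_combination -key

lemma sandwich {ν ω φ : ℝ} (hν : 0 < ν) (hω : 0 < ω) (hφ : 0 < φ) :
    (ν+1)/ω ≤ Real.sqrt (φ/ω) * besselR (ν+1) (2*Real.sqrt (ω*φ)) ∧
    Real.sqrt (φ/ω) * besselR (ν+1) (2*Real.sqrt (ω*φ)) ≤ (ν+1)/ω + φ/ν := by
  set s : ℝ := Real.sqrt (φ/ω) with hs
  have hspos : 0 < s := Real.sqrt_pos.mpr (by positivity)
  have e : Real.sqrt (ω*φ) = s * ω := by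
    rw [hs, show ω*φ = (φ/ω)*ω^2 by field_simp, Real.sqrt_mul (by positivity),
      Real.sqrt_sq hω.le]
  set z : ℝ := 2*Real.sqrt (ω*φ) with hz
  have hzpos : 0 < z := by rw [hz, e]; positivity
  have hze : z = 2 * (s * ω) := by rw [hz, e]
  have hK0 := besselK_pos ν z hzpos
  have hK1 := besselK_pos (ν+1) z hzpos
  have hKm := besselK_pos (ν-1) z hzpos
  have rec1 := besselK_rec (show 0 < ν+1 by linarith) hzpos
  rw [add_sub_cancel_right] at rec1
  have rec0 := besselK_rec hν hzpos
  have hR : besselR (ν+1) z = 2*(ν+1)/z + besselK ν z / besselK (ν+1) z := by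
    rw [besselR]
    rw [div_add_div _ _ hzpos.ne' hK1.ne', div_eq_div_iff hK1.ne' (by positivity)]
    linear_combination besselK (ν+1) z * rec1
  have hfirst : s * (2*(ν+1)/z) = (ν+1)/ω := by
    rw [hze]; field_simp
  have hratio : besselK ν z / besselK (ν+1) z ≤ z/(2*ν) := by
    rw [div_le_div_iff₀ hK1 (by positivity)]
    nlinarith [mul_pos hzpos hKm]
  have hsφ : s * s = φ/ω := Real.mul_self_sqrt (by positivity)
  have hsecond : s * (besselK ν z / besselK (ν+1) z) ≤ φ/ν := by
    calc s * (besselK ν z / besselK (ν+1) z) ≤ s * (z/(2*ν)) := by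
          exact mul_le_mul_of_nonneg_left hratio hspos.le
      _ = (s*s) * ω / ν := by rw [hze]; field_simp
      _ = φ/ν := by rw [hsφ]; field_simp
  have hT : s * besselR (ν+1) z = (ν+1)/ω + s * (besselK ν z / besselK (ν+1) z) := by
    rw [hR, mul_add, hfirst]
  constructor
  · rw [hT]
    have : 0 ≤ s * (besselK ν z / besselK (ν+1) z) := by positivity
    linarith
  · rw [hT]
    linarith [hsecond]


/-- **Theorem 4e: vanishing coefficient of variation of the prior.**
Keeping the prior mean `μ = α₀β₀` of the Pareto tail index fixed and letting the prior
coefficient of variation `1/√α₀` tend to 0 (i.e. `α₀ → ∞`, `β₀ = μ/α₀`), the posterior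
mean of the tail index converges to the prior mean `μ`. -/
theorem pareto_posterior_mean_tendsto_of_precise_prior
    (μ L ξ θbar : ℝ) (hμ : 0 < μ) (hL : 0 < L) (hξ : 0 < ξ) (hθbar : 0 < θbar)
    (K M : ℕ) (hM : 1 ≤ M) (x : Fin K → ℝ) (hx : ∀ k, L ≤ x k)
    (φ S : ℝ) (hφ : φ = ξ * M * θbar) (hS : S = ∑ k, Real.log (x k / L)) :
    Tendsto (fun α₀ : ℝ =>
        Real.sqrt (φ / (α₀ / μ + S)) *
          besselR ((α₀ - 1 - M * ξ + K) + 1) (2 * Real.sqrt ((α₀ / μ + S) * φ)))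
      atTop (nhds μ) := by
  have hM0 : (0:ℝ) < M := by exact_mod_cast Nat.lt_of_lt_of_le Nat.zero_lt_one hM
  have hφ0 : 0 < φ := by rw [hφ]; positivity
  have hS0 : 0 ≤ S := by
    rw [hS]
    refine Finset.sum_nonneg fun k _ => Real.log_nonneg ?_
    rw [le_div_iff₀ hL, one_mul]
    exact hx k
  set lo : ℝ → ℝ := fun α => ((α - 1 - M * ξ + K) + 1)/(α/μ + S) with hlo_def
  set tail : ℝ → ℝ := fun α => φ/(α - 1 - M * ξ + K) with htail_def
  have hlo : Tendsto lo atTop (𝓝 μ) := by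
    have hnum : Tendsto (fun α : ℝ => 1 - ((M:ℝ)*ξ - K) * α⁻¹) atTop (𝓝 1) := by
      have h := tendsto_inv_atTop_zero.const_mul ((M:ℝ)*ξ - K)
      simpa using tendsto_const_nhds.sub h
    have hden : Tendsto (fun α : ℝ => 1/μ + S * α⁻¹) atTop (𝓝 (1/μ)) := by
      have h := tendsto_inv_atTop_zero.const_mul S
      simpa using tendsto_const_nhds.add h
    have h := hnum.div hden (by positivity)
    have hμeq : (1:ℝ) / (1/μ) = μ := by field_simp
    rw [hμeq] at h
    refine h.congr' ?_
    filter_upwards [eventually_gt_atTop (0:ℝ)] with α hα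
    have hω : 0 < α/μ + S := by positivity
    have hden2 : 0 < 1/μ + S * α⁻¹ := by positivity
    show (1 - ((M:ℝ)*ξ - K) * α⁻¹) / (1/μ + S * α⁻¹) = _
    rw [hlo_def]
    rw [div_eq_div_iff hden2.ne' hω.ne']
    field_simp
    ring
  have htail : Tendsto tail atTop (𝓝 0) := by
    have hg : Tendsto (fun α : ℝ => α + (-1 - M*ξ + K)) atTop atTop :=
      tendsto_atTop_add_const_right atTop _ tendsto_id
    have h := (tendsto_inv_atTop_zero.comp hg).const_mul φ
    rw [mul_zero] at h
    refine h.congr ?_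
    intro α
    simp only [htail_def, Function.comp]
    rw [div_eq_mul_inv]
    ring_nf
  have hup : Tendsto (fun α => lo α + tail α) atTop (𝓝 μ) := by
    simpa using hlo.add htail
  refine tendsto_of_tendsto_of_tendsto_of_le_of_le' hlo hup ?_ ?_
  · filter_upwards [eventually_gt_atTop (1 + (M:ℝ)*ξ), eventually_gt_atTop (0:ℝ)] with α h1 h0
    have hν : 0 < α - 1 - M*ξ + K := by
      have : (0:ℝ) ≤ K := Nat.cast_nonneg K
      linarith
    have hω : 0 < α/μ + S := by positivity
    exact (sandwich hν hω hφ0).1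
  · filter_upwards [eventually_gt_atTop (1 + (M:ℝ)*ξ), eventually_gt_atTop (0:ℝ)] with α h1 h0
    have hν : 0 < α - 1 - M*ξ + K := by
      have : (0:ℝ) ≤ K := Nat.cast_nonneg K
      linarith
    have hω : 0 < α/μ + S := by positivity
    exact (sandwich hν hω hφ0).2
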